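/- Let q ≥ 3 be a prime power. Taking the points of a resolvable TD(q-1,q) as servers and its q² blocks as items yields a (q-1)-uniform combinatorial batch code with parameters n = q², N = q³-q², k = q²-q-1, m = q²-q; i.e., any r ≤ q²-q-1 blocks of TD(q-1,q) cover at least r points. -/

import Mathlib

/-- A transversal design TD(ℓ,h): points `α`, `ℓ` groups of size `h`, blocks of size `ℓ`
meeting each group in exactly one point, every pair of points from different groups in
exactly one block. -/
structure TD (α : Type) [DecidableEq α] [Fintype α] (ℓ h : ℕ) where
  groups : Finset (Finset α)
  blocks : Finset (Finset α)
  card_points : Fintype.card α = ℓ * h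
  groups_card : groups.card = ℓ
  group_size : ∀ G ∈ groups, G.card = h
  groups_partition : ∀ x : α, ∃! G, G ∈ groups ∧ x ∈ G
  block_size : ∀ B ∈ blocks, B.card = ℓ
  block_meets_group : ∀ B ∈ blocks, ∀ G ∈ groups, (B ∩ G).card = 1
  pair_unique : ∀ x y : α, x ≠ y → (∀ G ∈ groups, ¬(x ∈ G ∧ y ∈ G)) →
    ∃! B, B ∈ blocks ∧ x ∈ B ∧ y ∈ B

/-- A resolvable transversal design: the blocks are partitioned into `h` parallel
classes of `h` pairwise disjoint blocks, each class covering every point exactly once. -/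
structure RTD (α : Type) [DecidableEq α] [Fintype α] (ℓ h : ℕ) extends TD α ℓ h where
  classes : Finset (Finset (Finset α))
  classes_card : classes.card = h
  class_sub : ∀ C ∈ classes, C ⊆ blocks
  class_card : ∀ C ∈ classes, C.card = h
  class_cover : ∀ C ∈ classes, ∀ x : α, ∃! B, B ∈ C ∧ x ∈ B
  block_class : ∀ B ∈ blocks, ∃! C, C ∈ classes ∧ B ∈ C

section Aux

variable {α : Type} [DecidableEq α] [Fintype α] {ℓ h : ℕ}

/-- Two distinct blocks of a TD meet in at most one point. -/
lemma TD.inter_card_le_one (D : TD α ℓ h) {B1 B2 : Finset α}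
    (h1 : B1 ∈ D.blocks) (h2 : B2 ∈ D.blocks) (hne : B1 ≠ B2) :
    ∀ x ∈ B1 ∩ B2, ∀ y ∈ B1 ∩ B2, x = y := by
  intro x hx y hy
  rw [Finset.mem_inter] at hx hy
  by_contra hxy
  have hng : ∀ G ∈ D.groups, ¬(x ∈ G ∧ y ∈ G) := by
    rintro G hG ⟨hxG, hyG⟩
    have h1c := D.block_meets_group B1 h1 G hG
    have h2c : 1 < (B1 ∩ G).card :=
      Finset.one_lt_card.mpr ⟨x, Finset.mem_inter.mpr ⟨hx.1, hxG⟩,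
        y, Finset.mem_inter.mpr ⟨hy.1, hyG⟩, hxy⟩
    omega
  obtain ⟨B, -, hu⟩ := D.pair_unique x y hxy hng
  exact hne ((hu B1 ⟨h1, hx.1, hy.1⟩).trans (hu B2 ⟨h2, hx.2, hy.2⟩).symm)

/-- Distinct parallel classes are disjoint. -/
lemma RTD.classes_disjoint (D : RTD α ℓ h) {C1 C2 : Finset (Finset α)}
    (h1 : C1 ∈ D.classes) (h2 : C2 ∈ D.classes) (hne : C1 ≠ C2) : Disjoint C1 C2 := by
  rw [Finset.disjoint_left]
  intro B hB1 hB2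
  obtain ⟨C, -, hu⟩ := D.block_class B (D.class_sub C1 h1 hB1)
  exact hne ((hu C1 ⟨h1, hB1⟩).trans (hu C2 ⟨h2, hB2⟩).symm)

/-- Distinct blocks in the same parallel class are disjoint. -/
lemma RTD.class_blocks_disjoint (D : RTD α ℓ h) {C : Finset (Finset α)} (hC : C ∈ D.classes)
    {B1 B2 : Finset α} (h1 : B1 ∈ C) (h2 : B2 ∈ C) (hne : B1 ≠ B2) : Disjoint B1 B2 := by
  rw [Finset.disjoint_left]
  intro x hx1 hx2
  obtain ⟨B, -, hu⟩ := D.class_cover C hC x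
  exact hne ((hu B1 ⟨h1, hx1⟩).trans (hu B2 ⟨h2, hx2⟩).symm)

lemma RTD.blocks_eq (D : RTD α ℓ h) : D.blocks = D.classes.biUnion id := by
  ext B
  simp only [Finset.mem_biUnion, id]
  constructor
  · intro hB
    obtain ⟨C, ⟨hC, hBC⟩, -⟩ := D.block_class B hB
    exact ⟨C, hC, hBC⟩
  · rintro ⟨C, hC, hBC⟩
    exact D.class_sub C hC hBC

end Aux

/-- For q ≥ 3 a prime power, taking the q(q-1) points of a resolvable
TD(q-1,q) as servers and its q² blocks as items yields a (q-1)-uniform CBC with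
n = q², N = q³-q², k = q²-q-1, m = q²-q: the parameters are as stated and any
r ≤ q²-q-1 blocks cover at least r points. -/
theorem stmt_15 {α : Type} [DecidableEq α] [Fintype α] (q : ℕ) (hq : 3 ≤ q)
    (hpp : IsPrimePow q) (D : RTD α (q - 1) q) :
    D.blocks.card = q ^ 2 ∧
    (∑ B ∈ D.blocks, B.card) = q ^ 3 - q ^ 2 ∧
    Fintype.card α = q ^ 2 - q ∧
    (∀ B ∈ D.blocks, B.card = q - 1) ∧
    (∀ R ⊆ D.blocks, R.card ≤ q ^ 2 - q - 1 → R.card ≤ (R.biUnion id).card) := by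
  have hpts : (q-1) * q = q^2 - q := by rw [Nat.sub_mul]; ring_nf
  have hbcard : D.blocks.card = q ^ 2 := by
    have hcb := Finset.card_biUnion (s := D.classes) (t := id)
      (fun C1 h1 C2 h2 hne => D.classes_disjoint h1 h2 hne)
    rw [D.blocks_eq, hcb]
    simp only [id]
    rw [Finset.sum_congr rfl (fun C hC => D.class_card C hC),
      Finset.sum_const, D.classes_card, smul_eq_mul, sq]
  refine ⟨hbcard, ?_, ?_, fun B hB => D.block_size B hB, ?_⟩
  · rw [Finset.sum_congr rfl (fun B hB => D.block_size B hB), Finset.sum_const, hbcard,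
      smul_eq_mul, Nat.mul_sub]
    ring_nf
  · rw [D.card_points, hpts]
  intro R hR hRcard
  set U := R.biUnion id with hU
  -- decompose R by classes
  have hRdecomp : R = D.classes.biUnion (fun C => R ∩ C) := by
    ext B
    simp only [Finset.mem_biUnion, Finset.mem_inter]
    constructor
    · intro hB
      obtain ⟨C, ⟨hC, hBC⟩, -⟩ := D.block_class B (hR hB)
      exact ⟨C, hC, hB, hBC⟩
    · rintro ⟨C, -, hBR, -⟩
      exact hBR
  have hRsum : R.card = ∑ C ∈ D.classes, (R ∩ C).card := by
    conv_lhs => rw [hRdecomp]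
    exact Finset.card_biUnion (fun C1 h1 C2 h2 hne =>
      (D.classes_disjoint h1 h2 hne).mono Finset.inter_subset_right Finset.inter_subset_right)
  have hCsne : D.classes.Nonempty := by
    rw [← Finset.card_pos, D.classes_card]; omega
  by_cases hfull : ∃ C ∈ D.classes, (R ∩ C).card = q
  · -- Case A: a full parallel class is in R, so R covers everything
    obtain ⟨C, hC, hCq⟩ := hfull
    have hCR : C ⊆ R := by
      have heq : R ∩ C = C := Finset.eq_of_subset_of_card_le Finset.inter_subset_right
        (by rw [hCq, D.class_card C hC])
      intro B hB
      rw [← heq] at hB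
      exact (Finset.mem_inter.mp hB).1
    have hUuniv : U = Finset.univ := by
      apply Finset.eq_univ_of_forall
      intro x
      obtain ⟨B, ⟨hBC, hxB⟩, -⟩ := D.class_cover C hC x
      exact Finset.mem_biUnion.mpr ⟨B, hCR hBC, hxB⟩
    rw [hUuniv, Finset.card_univ, D.card_points]
    omega
  push_neg at hfull
  have hle : ∀ C ∈ D.classes, (R ∩ C).card ≤ q - 1 := by
    intro C hC
    have h1 : (R ∩ C).card ≤ q := by
      rw [← D.class_card C hC]
      exact Finset.card_le_card Finset.inter_subset_right
    have := hfull C hC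
    omega
  obtain ⟨C0, hC0, hmax⟩ := Finset.exists_max_image D.classes (fun C => (R ∩ C).card) hCsne
  set a := (R ∩ C0).card with ha
  have ha_le : a ≤ q - 1 := hle C0 hC0
  -- union of the blocks of R in a single class has a*(q-1) points
  have hclUnion : ∀ C ∈ D.classes, ((R ∩ C).biUnion id).card = (R ∩ C).card * (q - 1) := by
    intro C hC
    have hcb := Finset.card_biUnion (s := R ∩ C) (t := id)
      (fun B1 h1 B2 h2 hne => D.class_blocks_disjoint hC
        (Finset.mem_inter.mp h1).2 (Finset.mem_inter.mp h2).2 hne)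
    rw [hcb]
    exact Finset.sum_const_nat (fun B hB => D.block_size B (hR (Finset.mem_inter.mp hB).1))
  have hUbound : a * (q-1) ≤ U.card := by
    rw [ha, ← hclUnion C0 hC0]
    exact Finset.card_le_card
      (Finset.biUnion_subset_biUnion_of_subset_left _ Finset.inter_subset_left)
  by_cases hzero : ∃ C ∈ D.classes, (R ∩ C).card = 0
  · -- Case B: some class untouched by R
    obtain ⟨C1, hC1, hC1z⟩ := hzero
    have hrb : R.card ≤ (q-1) * a := by
      rw [hRsum, ← Finset.add_sum_erase _ _ hC1, hC1z, zero_add]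
      calc ∑ C ∈ D.classes.erase C1, (R ∩ C).card
          ≤ ∑ _C ∈ D.classes.erase C1, a :=
            Finset.sum_le_sum (fun C hC => hmax C (Finset.mem_of_mem_erase hC))
        _ = (q-1) * a := by
            rw [Finset.sum_const, Finset.card_erase_of_mem hC1, D.classes_card, smul_eq_mul]
    calc R.card ≤ (q-1) * a := hrb
      _ = a * (q-1) := Nat.mul_comm _ _
      _ ≤ U.card := hUbound
  push_neg at hzero
  have hpos : ∀ C ∈ D.classes, 1 ≤ (R ∩ C).card :=
    fun C hC => Nat.pos_of_ne_zero (hzero C hC)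
  have herase_ne : (D.classes.erase C0).Nonempty := by
    rw [← Finset.card_pos, Finset.card_erase_of_mem hC0, D.classes_card]; omega
  by_cases ha2 : 2 ≤ a
  · -- Case C2: max intersection is at least 2
    obtain ⟨C1, hC1e, hmax2⟩ := Finset.exists_max_image _ (fun C => (R ∩ C).card) herase_ne
    have hC1 : C1 ∈ D.classes := Finset.mem_of_mem_erase hC1e
    have hC01 : C0 ≠ C1 := (Finset.ne_of_mem_erase hC1e).symm
    set b := (R ∩ C1).card with hb
    have hb1 : 1 ≤ b := hpos C1 hC1
    have hba : b ≤ a := hmax C1 hC1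
    have hrb : R.card ≤ a + (q-1) * b := by
      rw [hRsum, ← Finset.add_sum_erase _ _ hC0]
      have : ∑ C ∈ D.classes.erase C0, (R ∩ C).card ≤ (q-1) * b := by
        calc ∑ C ∈ D.classes.erase C0, (R ∩ C).card
            ≤ ∑ _C ∈ D.classes.erase C0, b := Finset.sum_le_sum hmax2
          _ = (q-1) * b := by
              rw [Finset.sum_const, Finset.card_erase_of_mem hC0, D.classes_card, smul_eq_mul]
      omega
    -- count uncovered points
    have hc0 : (C0 \ R).card = q - a := by
      have h1 := Finset.card_inter_add_card_sdiff C0 R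
      rw [Finset.inter_comm, D.class_card C0 hC0] at h1
      omega
    have hc1 : (C1 \ R).card = q - b := by
      have h1 := Finset.card_inter_add_card_sdiff C1 R
      rw [Finset.inter_comm, D.class_card C1 hC1] at h1
      omega
    have hVcard : ((Finset.univ : Finset α) \ U).card ≤ (q - a) * (q - b) := by
      have hmain : ((Finset.univ : Finset α) \ U).card ≤ ((C0 \ R) ×ˢ (C1 \ R)).card := by
        apply Finset.card_le_card_of_injOn
          (fun x => ((D.class_cover C0 hC0 x).choose, (D.class_cover C1 hC1 x).choose))
        · intro x hx
          rw [Finset.mem_coe, Finset.mem_sdiff] at hx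
          have hs0 := (D.class_cover C0 hC0 x).choose_spec.1
          have hs1 := (D.class_cover C1 hC1 x).choose_spec.1
          rw [Finset.mem_coe, Finset.mem_product]
          constructor
          · rw [Finset.mem_sdiff]
            refine ⟨hs0.1, fun hmem => hx.2 ?_⟩
            exact Finset.mem_biUnion.mpr ⟨_, hmem, hs0.2⟩
          · rw [Finset.mem_sdiff]
            refine ⟨hs1.1, fun hmem => hx.2 ?_⟩
            exact Finset.mem_biUnion.mpr ⟨_, hmem, hs1.2⟩
        · intro x _ y _ heq
          have h0 : (D.class_cover C0 hC0 x).choose = (D.class_cover C0 hC0 y).choose :=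
            congrArg Prod.fst heq
          have h1 : (D.class_cover C1 hC1 x).choose = (D.class_cover C1 hC1 y).choose :=
            congrArg Prod.snd heq
          have hs0x : (D.class_cover C0 hC0 x).choose ∈ C0 ∧ x ∈ (D.class_cover C0 hC0 x).choose :=
            (D.class_cover C0 hC0 x).choose_spec.1
          have hs1x : (D.class_cover C1 hC1 x).choose ∈ C1 ∧ x ∈ (D.class_cover C1 hC1 x).choose :=
            (D.class_cover C1 hC1 x).choose_spec.1
          have hs0y : (D.class_cover C0 hC0 y).choose ∈ C0 ∧ y ∈ (D.class_cover C0 hC0 y).choose :=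
            (D.class_cover C0 hC0 y).choose_spec.1
          have hs1y : (D.class_cover C1 hC1 y).choose ∈ C1 ∧ y ∈ (D.class_cover C1 hC1 y).choose :=
            (D.class_cover C1 hC1 y).choose_spec.1
          rw [← h0] at hs0y
          rw [← h1] at hs1y
          have hBne : (D.class_cover C0 hC0 x).choose ≠ (D.class_cover C1 hC1 x).choose :=
            fun hEq => Finset.disjoint_left.mp (D.classes_disjoint hC0 hC1 hC01) hs0x.1
              (hEq ▸ hs1x.1)
          exact D.toTD.inter_card_le_one (D.class_sub C0 hC0 hs0x.1)
            (D.class_sub C1 hC1 hs1x.1) hBne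
            x (Finset.mem_inter.mpr ⟨hs0x.2, hs1x.2⟩)
            y (Finset.mem_inter.mpr ⟨hs0y.2, hs1y.2⟩)
      rwa [Finset.card_product, hc0, hc1] at hmain
    have huniv : ((Finset.univ : Finset α) \ U).card + U.card = (q-1) * q := by
      rw [Finset.card_sdiff_add_card_eq_card (Finset.subset_univ U), Finset.card_univ,
        D.card_points]
    by_cases hbq : b = q - 1
    · have haq : a = q - 1 := by omega
      have hone : (q - a) * (q - b) = 1 := by
        rw [haq, hbq]
        have : q - (q-1) = 1 := by omega
        rw [this, Nat.one_mul]
      omega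
    · have hbq2 : b ≤ q - 2 := by omega
      have key : a + (q-1) * b + (q - a) * (q - b) ≤ (q-1) * q := by
        have hza : (2:ℤ) ≤ (a:ℤ) := by exact_mod_cast ha2
        have hzb : (1:ℤ) ≤ (b:ℤ) := by exact_mod_cast hb1
        have hzba : (b:ℤ) ≤ (a:ℤ) := by exact_mod_cast hba
        have hzaq : (a:ℤ) ≤ (q:ℤ) - 1 := by
          have : a + 1 ≤ q := by omega
          push_cast at this ⊢; omega
        have hzbq : (b:ℤ) ≤ (q:ℤ) - 2 := by
          have : b + 2 ≤ q := by omega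
          push_cast at this ⊢; omega
        zify [show a ≤ q by omega, show b ≤ q by omega, show 1 ≤ q by omega]
        nlinarith [mul_nonneg (by linarith : (0:ℤ) ≤ (a:ℤ) - 2)
          (by linarith : (0:ℤ) ≤ (q:ℤ) - 1 - (b:ℤ))]
      omega
  · -- Case C1: every class meets R in exactly one block
    have hall1 : ∀ C ∈ D.classes, (R ∩ C).card = 1 := by
      intro C hC
      have h1 := hmax C hC
      have h2 := hpos C hC
      omega
    have hrq : R.card = q := by
      rw [hRsum, Finset.sum_congr rfl hall1, Finset.sum_const, D.classes_card,
        smul_eq_mul, Nat.mul_one]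
    obtain ⟨C1, hC1e⟩ := herase_ne
    have hC1 : C1 ∈ D.classes := Finset.mem_of_mem_erase hC1e
    have hC01 : C0 ≠ C1 := (Finset.ne_of_mem_erase hC1e).symm
    obtain ⟨B0, hB0⟩ : (R ∩ C0).Nonempty := by
      rw [← Finset.card_pos]; exact hpos C0 hC0
    obtain ⟨B1, hB1⟩ : (R ∩ C1).Nonempty := by
      rw [← Finset.card_pos]; exact hpos C1 hC1
    rw [Finset.mem_inter] at hB0 hB1
    have hBne : B0 ≠ B1 := by
      intro hEq
      have := Finset.disjoint_left.mp (D.classes_disjoint hC0 hC1 hC01) hB0.2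
      rw [hEq] at this
      exact this hB1.2
    have hsubU : B0 ∪ B1 ⊆ U := by
      apply Finset.union_subset
      · exact Finset.subset_biUnion_of_mem id hB0.1
      · exact Finset.subset_biUnion_of_mem id hB1.1
    have hcu := Finset.card_union_add_card_inter B0 B1
    have hint : (B0 ∩ B1).card ≤ 1 := Finset.card_le_one.mpr
      (D.toTD.inter_card_le_one (hR hB0.1) (hR hB1.1) hBne)
    have hsz0 : B0.card = q - 1 := D.block_size B0 (hR hB0.1)
    have hsz1 : B1.card = q - 1 := D.block_size B1 (hR hB1.1)
    have hle2 : (B0 ∪ B1).card ≤ U.card := Finset.card_le_card hsubU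
    omega
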